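/- If X is a topological space, then the lower powerspace A(X) (the set of closed subsets of X with the lower Vietoris topology) is sober. -/
import Mathlib


open Set Topology

/-- The lower powerspace: closed subsets of `X`. -/
def LowerPS (X : Type*) [TopologicalSpace X] : Type _ := {A : Set X // IsClosed A}

/-- Lower Vietoris topology, generated by the sets `◇U = {A | A ∩ U ≠ ∅}` for `U` open. -/
instance (X : Type*) [TopologicalSpace X] : TopologicalSpace (LowerPS X) :=
  .generateFrom {S | ∃ U : Set X, IsOpen U ∧ S = {A : LowerPS X | (A.1 ∩ U).Nonempty}}

/-- The upper powerspace: compact saturated subsets of `X`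
(saturated = intersection of all open neighborhoods). -/
def UpperPS (X : Type*) [TopologicalSpace X] : Type _ :=
  {K : Set X // IsCompact K ∧ K = ⋂₀ {U : Set X | IsOpen U ∧ K ⊆ U}}

/-- Upper Vietoris topology, generated by the sets `□U = {K | K ⊆ U}` for `U` open. -/
instance (X : Type*) [TopologicalSpace X] : TopologicalSpace (UpperPS X) :=
  .generateFrom {S | ∃ U : Set X, IsOpen U ∧ S = {K : UpperPS X | K.1 ⊆ U}}

/-- A `Π⁰₂` subset. -/
def IsPi02 {Y : Type*} [TopologicalSpace Y] (S : Set Y) : Prop :=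
  ∃ U V : ℕ → Set Y, (∀ i, IsOpen (U i)) ∧ (∀ i, IsOpen (V i)) ∧
    ∀ y, y ∈ S ↔ ∀ i, y ∈ U i → y ∈ V i

/-- The Scott topology on `P(ω)`, generated by the sets `{x | F ⊆ x}` for finite `F`. -/
instance : TopologicalSpace (Set ℕ) :=
  .generateFrom {S | ∃ F : Finset ℕ, S = {x : Set ℕ | ↑F ⊆ x}}

/-- A space is quasi-Polish iff it is homeomorphic to a `Π⁰₂` subspace of `P(ω)`
with the Scott topology. -/
def QuasiPolish (X : Type*) [TopologicalSpace X] : Prop :=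
  ∃ S : Set (Set ℕ), IsPi02 S ∧ Nonempty (X ≃ₜ S)

/-- Scott-open subsets of a preorder. -/
def IsScottOpen {α : Type*} [Preorder α] (U : Set α) : Prop :=
  (∀ ⦃a b : α⦄, a ≤ b → a ∈ U → b ∈ U) ∧
  ∀ d : Set α, d.Nonempty → DirectedOn (· ≤ ·) d → ∀ a : α, IsLUB d a → a ∈ U →
    (d ∩ U).Nonempty

/-- The Scott topology on a preorder. -/
def scottTop (α : Type*) [Preorder α] : TopologicalSpace α := .generateFrom {U | IsScottOpen U}

/-- The frame of open subsets of `X`, ordered by inclusion. -/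
def OpensT (X : Type*) [TopologicalSpace X] : Type _ := {U : Set X // IsOpen U}

instance (X : Type*) [TopologicalSpace X] : PartialOrder (OpensT X) :=
  inferInstanceAs (PartialOrder {U : Set X // IsOpen U})

/-- `O(X)` carries the Scott topology. -/
instance (X : Type*) [TopologicalSpace X] : TopologicalSpace (OpensT X) := scottTop (OpensT X)

/-- `□◇U` in `K(A(X))`. -/
def boxDia {X : Type*} [TopologicalSpace X] (U : Set X) : Set (UpperPS (LowerPS X)) :=
  {𝒦 | ∀ A ∈ 𝒦.1, ((A : LowerPS X).1 ∩ U).Nonempty}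

/-- `◇□U` in `A(K(X))`. -/
def diaBox {X : Type*} [TopologicalSpace X] (U : Set X) : Set (LowerPS (UpperPS X)) :=
  {𝒜 | ∃ K ∈ 𝒜.1, (K : UpperPS X).1 ⊆ U}

/-- A space is consonant iff every Scott-open family of opens containing `U` contains
a compact-saturated filter neighborhood `▽K` of `U`. -/
def Consonant (X : Type*) [TopologicalSpace X] : Prop :=
  ∀ H : Set (OpensT X), IsScottOpen H → ∀ U ∈ H,
    ∃ K : UpperPS X, K.1 ⊆ U.1 ∧ ∀ V : OpensT X, K.1 ⊆ V.1 → V ∈ H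

/-- A space is co-consonant. -/
def CoConsonant (Y : Type*) [TopologicalSpace Y] : Prop :=
  ∀ H : Set (OpensT Y), IsScottOpen H → ∀ U ∈ H,
    ∃ F : Finset (Set Y), (∀ A ∈ F, IsClosed A) ∧ (∀ A ∈ F, (U.1 ∩ A).Nonempty) ∧
      ∀ V : OpensT Y, (∀ A ∈ F, (V.1 ∩ A).Nonempty) → V ∈ H



section LowerPSSober

variable {X : Type*} [TopologicalSpace X]

private lemma lowerPS_subbasis :
    (inferInstance : TopologicalSpace (LowerPS X)) =
      .generateFrom {S | ∃ U : Set X, IsOpen U ∧ S = {A : LowerPS X | (A.1 ∩ U).Nonempty}} :=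
  rfl

private lemma lowerPS_isOpen_upward {O : Set (LowerPS X)} (hO : IsOpen O) :
    ∀ {a b : LowerPS X}, a.1 ⊆ b.1 → a ∈ O → b ∈ O := by
  have h : TopologicalSpace.GenerateOpen
      {S | ∃ U : Set X, IsOpen U ∧ S = {A : LowerPS X | (A.1 ∩ U).Nonempty}} O := hO
  clear hO
  induction h with
  | basic S hS =>
    rintro a b hab ha
    obtain ⟨U, hU, rfl⟩ := hS
    exact ha.mono (Set.inter_subset_inter_left U hab)
  | univ => intro a b _ _; trivial
  | inter S T _ _ ihS ihT => intro a b hab ha; exact ⟨ihS hab ha.1, ihT hab ha.2⟩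
  | sUnion 𝒮 _ ih =>
    rintro a b hab ⟨S, hS, ha⟩
    exact ⟨S, hS, ih S hS hab ha⟩

private lemma lowerPS_mem_closure_singleton {a b : LowerPS X} :
    a ∈ closure {b} ↔ a.1 ⊆ b.1 := by
  constructor
  · intro h x hx
    by_contra hxb
    have hO : IsOpen {A : LowerPS X | (A.1 ∩ b.1ᶜ).Nonempty} :=
      TopologicalSpace.GenerateOpen.basic _ ⟨b.1ᶜ, b.2.isOpen_compl, rfl⟩
    obtain ⟨c, hc, hcb⟩ := mem_closure_iff.1 h _ hO ⟨x, hx, hxb⟩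
    rw [Set.mem_singleton_iff] at hcb
    subst hcb
    exact hc.ne_empty (Set.inter_compl_self _)
  · intro h
    rw [mem_closure_iff]
    intro O hO haO
    exact ⟨b, lowerPS_isOpen_upward hO h haO, rfl⟩

end LowerPSSober

/-- The lower powerspace of any topological space is sober
(sober = quasi-sober and T0). -/
theorem lowerPS_sober (X : Type*) [TopologicalSpace X] :
    QuasiSober (LowerPS X) ∧ T0Space (LowerPS X) := by
  constructor
  · constructor
    intro S hirr hcl
    classical
    set A₀ : LowerPS X := ⟨closure (⋃ A ∈ S, (A : LowerPS X).1), isClosed_closure⟩ with hA₀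
    have hsub : ∀ A ∈ S, (A : LowerPS X).1 ⊆ A₀.1 := fun A hA =>
      (Set.subset_biUnion_of_mem hA).trans subset_closure
    -- A₀ ∈ S
    have hA₀S : A₀ ∈ S := by
      rw [← hcl.closure_eq]
      rw [(TopologicalSpace.isTopologicalBasis_of_subbasis lowerPS_subbasis).mem_closure_iff]
      rintro o ⟨f, ⟨hf, hfs⟩, rfl⟩ hA₀o
      -- each member of f is open and meets S
      have hopen : ∀ u ∈ hf.toFinset, IsOpen u := by
        intro u hu
        rw [Set.Finite.mem_toFinset] at hu
        exact TopologicalSpace.GenerateOpen.basic _ (hfs hu)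
      have hmeets : ∀ u ∈ hf.toFinset, (S ∩ u).Nonempty := by
        intro u hu
        rw [Set.Finite.mem_toFinset] at hu
        obtain ⟨U, hU, rfl⟩ := hfs hu
        have hA₀u : (A₀.1 ∩ U).Nonempty := hA₀o _ hu
        obtain ⟨x, hx₁, hx₂⟩ := hA₀u
        obtain ⟨y, hyU, hy⟩ := mem_closure_iff.1 hx₁ U hU hx₂
        simp only [Set.mem_iUnion, exists_prop] at hy
        obtain ⟨A, hA, hyA⟩ := hy
        exact ⟨A, hA, ⟨y, hyA, hyU⟩⟩
      have := isIrreducible_iff_sInter.1 hirr hf.toFinset hopen hmeets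
      rw [Set.Finite.coe_toFinset] at this
      obtain ⟨A, hA₁, hA₂⟩ := this
      exact ⟨A, hA₂, hA₁⟩
    refine ⟨A₀, ?_⟩
    ext B
    rw [lowerPS_mem_closure_singleton]
    constructor
    · intro hB
      have : B ∈ closure {A₀} := lowerPS_mem_closure_singleton.2 hB
      exact closure_minimal (Set.singleton_subset_iff.2 hA₀S) hcl this
    · intro hB
      exact hsub B hB
  · rw [t0Space_iff_inseparable]
    intro a b hab
    have h1 : a.1 ⊆ b.1 := lowerPS_mem_closure_singleton.1 hab.specializes'.mem_closure
    have h2 : b.1 ⊆ a.1 := lowerPS_mem_closure_singleton.1 hab.specializes.mem_closure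
    exact Subtype.ext (h1.antisymm h2)
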